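/- Let A and B be N×T real matrices, let (α^A, γ^A) solve the h-weighted normal equations for A, and let (α^B, γ^B) solve the h-weighted normal equations for B. Then 𝒜ᵀ H̄^{-1} ℬ = (NT)^{-3/2} · Σ_{i,t} h_{it}·(α^A_i + γ^A_t)·(α^B_i + γ^B_t). -/

import Mathlib

open Matrix

/-- The penalized expected incidental-parameter Hessian
`H̄ = (NT)^{-1/2}·(M + b·v vᵀ)` with `v = (1_N', −1_T')'`. -/
noncomputable def Hbar {N T : ℕ} (w : Fin N → Fin T → ℝ) (b : ℝ) :
    Matrix (Fin N ⊕ Fin T) (Fin N ⊕ Fin T) ℝ :=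
  (Real.sqrt ((N : ℝ) * T))⁻¹ •
    (Matrix.fromBlocks (Matrix.diagonal fun i => ∑ t, w i t) (Matrix.of fun i t => w i t)
        (Matrix.of fun t i => w i t) (Matrix.diagonal fun t => ∑ i, w i t)
      + b • Matrix.vecMulVec (Sum.elim (fun _ => (1 : ℝ)) fun _ => -1)
          (Sum.elim (fun _ => (1 : ℝ)) fun _ => -1))

/-- The vector `𝒳 = (NT)^{-1}·(X 1_T ; Xᵀ 1_N)` associated to an `N×T` matrix `X`. -/
noncomputable def scoreVec {N T : ℕ} (X : Matrix (Fin N) (Fin T) ℝ) :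
    Fin N ⊕ Fin T → ℝ :=
  ((N : ℝ) * T)⁻¹ • Sum.elim (fun i => ∑ t, X i t) fun t => ∑ i, X i t

/-- If `(α^A, γ^A)` and `(α^B, γ^B)` solve the `h`-weighted normal equations for `A` and
`B`, then `𝒜ᵀ H̄⁻¹ ℬ = (NT)^{-3/2}·Σ_{i,t} h_{it}·(α^A_i + γ^A_t)·(α^B_i + γ^B_t)`. -/
theorem projection_formula_weighted {N T : ℕ} (hN : 0 < N) (hT : 0 < T)
    (w : Fin N → Fin T → ℝ) (hw : ∀ i t, 0 < w i t) (b : ℝ) (hb : 0 < b)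
    (hH : IsUnit (Hbar w b))
    (A B : Matrix (Fin N) (Fin T) ℝ)
    (αA : Fin N → ℝ) (γA : Fin T → ℝ)
    (hA1 : ∀ i, ∑ t, w i t * (αA i + γA t) = ∑ t, A i t)
    (hA2 : ∀ t, ∑ i, w i t * (αA i + γA t) = ∑ i, A i t)
    (αB : Fin N → ℝ) (γB : Fin T → ℝ)
    (hB1 : ∀ i, ∑ t, w i t * (αB i + γB t) = ∑ t, B i t)
    (hB2 : ∀ t, ∑ i, w i t * (αB i + γB t) = ∑ i, B i t) :
    scoreVec A ⬝ᵥ (Hbar w b)⁻¹.mulVec (scoreVec B)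
      = (Real.sqrt ((N : ℝ) * T) ^ 3)⁻¹ *
          ∑ i, ∑ t, w i t * (αA i + γA t) * (αB i + γB t) := by
  classical
  have hNT : (0:ℝ) < (N:ℝ) * T := by positivity
  set s := Real.sqrt ((N : ℝ) * T) with hs
  have hspos : 0 < s := Real.sqrt_pos.mpr hNT
  have hs2 : s * s = (N:ℝ) * T := Real.mul_self_sqrt hNT.le
  set v : Fin N ⊕ Fin T → ℝ := Sum.elim (fun _ => (1:ℝ)) (fun _ => -1) with hv
  set u : Fin N ⊕ Fin T → ℝ := Sum.elim αB γB with hu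
  have hNTsum : ((N:ℝ) + T) ≠ 0 := by positivity
  set c : ℝ := -(v ⬝ᵥ u) / ((N:ℝ) + T) with hc
  set u' : Fin N ⊕ Fin T → ℝ := u + c • v with hu'
  set M : Matrix (Fin N ⊕ Fin T) (Fin N ⊕ Fin T) ℝ :=
    Matrix.fromBlocks (Matrix.diagonal fun i => ∑ t, w i t) (Matrix.of fun i t => w i t)
      (Matrix.of fun t i => w i t) (Matrix.diagonal fun t => ∑ i, w i t) with hMdef
  have hvv : v ⬝ᵥ v = (N:ℝ) + T := by
    simp [hv, dotProduct, Fintype.sum_sum_type]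
  have hvu' : v ⬝ᵥ u' = 0 := by
    rw [hu', dotProduct_add, dotProduct_smul, smul_eq_mul, hvv, hc]
    field_simp
    ring
  have hMv : M *ᵥ v = 0 := by
    ext x
    cases x with
    | inl i =>
        simp [hMdef, hv, Matrix.mulVec, dotProduct, Fintype.sum_sum_type,
          Matrix.diagonal_apply, Finset.sum_ite_eq]
    | inr t =>
        simp [hMdef, hv, Matrix.mulVec, dotProduct, Fintype.sum_sum_type,
          Matrix.diagonal_apply, Finset.sum_ite_eq]
  have hMu : M *ᵥ u = ((N:ℝ) * T) • scoreVec B := by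
    ext x
    cases x with
    | inl i =>
        have : ∑ t, w i t * (αB i + γB t)
            = (∑ t, w i t) * αB i + ∑ t, w i t * γB t := by
          rw [Finset.sum_mul]
          rw [← Finset.sum_add_distrib]
          exact Finset.sum_congr rfl fun t _ => by ring
        simp only [hMdef, hu, Matrix.mulVec, dotProduct, Fintype.sum_sum_type,
          Matrix.fromBlocks_apply₁₁, Matrix.fromBlocks_apply₁₂, Sum.elim_inl, Sum.elim_inr,
          Matrix.diagonal_apply, Matrix.of_apply, scoreVec, Pi.smul_apply, smul_eq_mul,
          ite_mul, zero_mul, Finset.sum_ite_eq, Finset.mem_univ, if_true]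
        rw [show (↑N*↑T : ℝ) * ((↑N*↑T : ℝ)⁻¹ * ∑ t, B i t) = ∑ t, B i t from by
          field_simp, ← hB1 i, this]
    | inr t =>
        have : ∑ i, w i t * (αB i + γB t)
            = (∑ i, w i t) * γB t + ∑ i, w i t * αB i := by
          rw [Finset.sum_mul, ← Finset.sum_add_distrib]
          exact Finset.sum_congr rfl fun i _ => by ring
        simp only [hMdef, hu, Matrix.mulVec, dotProduct, Fintype.sum_sum_type,
          Matrix.fromBlocks_apply₂₁, Matrix.fromBlocks_apply₂₂, Sum.elim_inl, Sum.elim_inr,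
          Matrix.diagonal_apply, Matrix.of_apply, scoreVec, Pi.smul_apply, smul_eq_mul,
          ite_mul, zero_mul, Finset.sum_ite_eq, Finset.mem_univ, if_true]
        rw [show (↑N*↑T : ℝ) * ((↑N*↑T : ℝ)⁻¹ * ∑ i, B i t) = ∑ i, B i t from by
          field_simp, ← hB2 t, this]
        ring
  have hvmv : (Matrix.vecMulVec v v) *ᵥ u' = (v ⬝ᵥ u') • v := by
    ext j
    simp only [Matrix.mulVec, dotProduct, Matrix.vecMulVec_apply, Pi.smul_apply, smul_eq_mul]
    rw [Finset.sum_mul]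
    exact Finset.sum_congr rfl fun k _ => by ring
  have key : (Hbar w b) *ᵥ u' = s • scoreVec B := by
    rw [Hbar, ← hs, ← hMdef, ← hv, Matrix.smul_mulVec, Matrix.add_mulVec,
      Matrix.smul_mulVec, hvmv, hvu', zero_smul, smul_zero, add_zero,
      hu', Matrix.mulVec_add, Matrix.mulVec_smul, hMv, smul_zero, add_zero, hMu,
      smul_smul]
    congr 1
    rw [← hs2]
    field_simp
  have hd : IsUnit (Hbar w b).det := (Matrix.isUnit_iff_isUnit_det _).mp hH
  have h1 : s • ((Hbar w b)⁻¹ *ᵥ scoreVec B) = u' := by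
    rw [← Matrix.mulVec_smul, ← key, Matrix.mulVec_mulVec, Matrix.nonsing_inv_mul _ hd,
      Matrix.one_mulVec]
  have hinv : (Hbar w b)⁻¹ *ᵥ scoreVec B = s⁻¹ • u' := by
    rw [← h1, smul_smul, inv_mul_cancel₀ hspos.ne', one_smul]
  have hAv : scoreVec A ⬝ᵥ v = 0 := by
    have hcomm : ∑ i, ∑ t, A i t = ∑ t, ∑ i, A i t := Finset.sum_comm
    simp [scoreVec, dotProduct, Fintype.sum_sum_type, hv, ← Finset.mul_sum, hcomm]
  have hAu : scoreVec A ⬝ᵥ u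
      = ((N:ℝ) * T)⁻¹ * ∑ i, ∑ t, w i t * (αA i + γA t) * (αB i + γB t) := by
    have e1 : ∀ i, (∑ t, A i t) * αB i = ∑ t, w i t * (αA i + γA t) * αB i := by
      intro i; rw [← hA1 i, Finset.sum_mul]
    have e2 : ∀ t, (∑ i, A i t) * γB t = ∑ i, w i t * (αA i + γA t) * γB t := by
      intro t; rw [← hA2 t, Finset.sum_mul]
    have hcomm : ∑ t, ∑ i, w i t * (αA i + γA t) * γB t
        = ∑ i, ∑ t, w i t * (αA i + γA t) * γB t := Finset.sum_comm
    simp only [scoreVec, hu, dotProduct, Fintype.sum_sum_type, Sum.elim_inl, Sum.elim_inr,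
      Pi.smul_apply, smul_eq_mul, mul_assoc, ← Finset.mul_sum]
    congr 1
    rw [Finset.sum_congr rfl fun i _ => e1 i, Finset.sum_congr rfl fun t _ => e2 t,
      hcomm, ← Finset.sum_add_distrib]
    refine Finset.sum_congr rfl fun i _ => ?_
    rw [← Finset.sum_add_distrib]
    exact Finset.sum_congr rfl fun t _ => by ring
  rw [hinv, dotProduct_smul, smul_eq_mul, hu', dotProduct_add, dotProduct_smul,
    smul_eq_mul, hAv, mul_zero, add_zero, hAu]
  have h3 : ((s:ℝ) ^ 3)⁻¹ = s⁻¹ * ((N:ℝ) * T)⁻¹ := by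
    rw [pow_succ, pow_two, hs2, mul_inv]
    ring
  rw [h3, mul_assoc]
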